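/- Let G¹,...,G^d be antisymmetric 2d×2d matrices each of rank-2 form G^r_{kl} = b^r_k a^r_l - a^r_k b^r_l. Then the alternating sum Σ_{σ∈S_{2d}} sgn(σ) Π_{p=1}^d G^{r_p}_{σ(2p-1)σ(2p)}, summed over all d-tuples (r_1,...,r_d) ∈ {1,...,d}^d weighted by arbitrary coefficients c_{r_1}⋯c_{r_d}, equals the same sum restricted to tuples with pairwise distinct indices (r_1,...,r_d). -/
import Mathlib

open scoped BigOperators Matrix

/-- If a factor `f` is repeated at two distinct slots, the signed sum over all
permutations vanishes (pair `σ` with `σ * swap s t`). -/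
private lemma key17 {R : Type*} [CommRing R] [Algebra ℚ R] {n : ℕ}
    (s t : Fin n) (hst : s ≠ t) (f : Fin n → R) (h : Equiv.Perm (Fin n) → R)
    (hh : ∀ σ : Equiv.Perm (Fin n), h (σ * Equiv.swap s t) = h σ) :
    ∑ σ : Equiv.Perm (Fin n), (Equiv.Perm.sign σ : ℤ) • (f (σ s) * f (σ t) * h σ) = 0 := by
  have hre : (∑ σ : Equiv.Perm (Fin n),
      (Equiv.Perm.sign (σ * Equiv.swap s t) : ℤ) •
        (f ((σ * Equiv.swap s t) s) * f ((σ * Equiv.swap s t) t) * h (σ * Equiv.swap s t)))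
      = ∑ σ : Equiv.Perm (Fin n), (Equiv.Perm.sign σ : ℤ) • (f (σ s) * f (σ t) * h σ) :=
    Fintype.sum_bijective (fun σ => σ * Equiv.swap s t)
      (Group.mulRight_bijective _) _ _ (fun σ => rfl)
  have hptw : (∑ σ : Equiv.Perm (Fin n),
      (Equiv.Perm.sign (σ * Equiv.swap s t) : ℤ) •
        (f ((σ * Equiv.swap s t) s) * f ((σ * Equiv.swap s t) t) * h (σ * Equiv.swap s t)))
      = -∑ σ : Equiv.Perm (Fin n), (Equiv.Perm.sign σ : ℤ) • (f (σ s) * f (σ t) * h σ) := by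
    rw [← Finset.sum_neg_distrib]
    refine Finset.sum_congr rfl fun σ _ => ?_
    have h1 : (σ * Equiv.swap s t) s = σ t := by
      rw [Equiv.Perm.mul_apply, Equiv.swap_apply_left]
    have h2 : (σ * Equiv.swap s t) t = σ s := by
      rw [Equiv.Perm.mul_apply, Equiv.swap_apply_right]
    have h3 : (Equiv.Perm.sign (σ * Equiv.swap s t) : ℤ) = -(Equiv.Perm.sign σ : ℤ) := by
      rw [map_mul, Equiv.Perm.sign_swap hst]
      push_cast
      ring
    rw [h1, h2, h3, hh σ, ← neg_smul]
    congr 1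
    ring
  set S := ∑ σ : Equiv.Perm (Fin n), (Equiv.Perm.sign σ : ℤ) • (f (σ s) * f (σ t) * h σ) with hS
  have hneg : S = -S := by
    conv_lhs => rw [← hre]
    exact hptw
  have h2 : (2 : ℚ) • S = 0 := by
    rw [two_smul]
    nth_rewrite 2 [hneg]
    exact add_neg_cancel S
  calc S = ((2 : ℚ)⁻¹ * 2) • S := by norm_num
    _ = (2 : ℚ)⁻¹ • ((2 : ℚ) • S) := by rw [mul_smul]
    _ = 0 := by rw [h2, smul_zero]

/-- Two rank-2 antisymmetric factors built from the same pair `(A, B)` kill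
the alternating sum (3-term Plücker cancellation). -/
private lemma kill17 {R : Type*} [CommRing R] [Algebra ℚ R] {n : ℕ}
    (i j k l : Fin n) (hij : i ≠ j) (hik : i ≠ k) (hil : i ≠ l)
    (hjk : j ≠ k) (hjl : j ≠ l) (hkl : k ≠ l)
    (A B : Fin n → R) (Rest : Equiv.Perm (Fin n) → R)
    (hR1 : ∀ σ : Equiv.Perm (Fin n), Rest (σ * Equiv.swap i k) = Rest σ)
    (hR2 : ∀ σ : Equiv.Perm (Fin n), Rest (σ * Equiv.swap i l) = Rest σ) :
    ∑ σ : Equiv.Perm (Fin n), (Equiv.Perm.sign σ : ℤ) •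
      ((B (σ i) * A (σ j) - A (σ i) * B (σ j)) *
        (B (σ k) * A (σ l) - A (σ k) * B (σ l)) * Rest σ) = 0 := by
  have swIK : ∀ (σ : Equiv.Perm (Fin n)) (x : Fin n), x ≠ i → x ≠ k →
      (σ * Equiv.swap i k) x = σ x := by
    intro σ x h1 h2
    rw [Equiv.Perm.mul_apply, Equiv.swap_apply_of_ne_of_ne h1 h2]
  have swIL : ∀ (σ : Equiv.Perm (Fin n)) (x : Fin n), x ≠ i → x ≠ l →
      (σ * Equiv.swap i l) x = σ x := by
    intro σ x h1 h2
    rw [Equiv.Perm.mul_apply, Equiv.swap_apply_of_ne_of_ne h1 h2]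
  have e1 := key17 i k hik B (fun σ => A (σ j) * A (σ l) * Rest σ)
    (fun σ => by simp only [swIK σ j hij.symm hjk, swIK σ l hil.symm (Ne.symm hkl), hR1 σ])
  have e2 := key17 i l hil B (fun σ => A (σ j) * A (σ k) * Rest σ)
    (fun σ => by simp only [swIL σ j hij.symm hjl, swIL σ k hik.symm hkl, hR2 σ])
  have e3 := key17 i l hil A (fun σ => B (σ j) * B (σ k) * Rest σ)
    (fun σ => by simp only [swIL σ j hij.symm hjl, swIL σ k hik.symm hkl, hR2 σ])
  have e4 := key17 i k hik A (fun σ => B (σ j) * B (σ l) * Rest σ)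
    (fun σ => by simp only [swIK σ j hij.symm hjk, swIK σ l hil.symm (Ne.symm hkl), hR1 σ])
  have split : ∀ σ : Equiv.Perm (Fin n),
      (Equiv.Perm.sign σ : ℤ) •
        ((B (σ i) * A (σ j) - A (σ i) * B (σ j)) *
          (B (σ k) * A (σ l) - A (σ k) * B (σ l)) * Rest σ)
      = (Equiv.Perm.sign σ : ℤ) • (B (σ i) * B (σ k) * (A (σ j) * A (σ l) * Rest σ))
        - (Equiv.Perm.sign σ : ℤ) • (B (σ i) * B (σ l) * (A (σ j) * A (σ k) * Rest σ))
        - (Equiv.Perm.sign σ : ℤ) • (A (σ i) * A (σ l) * (B (σ j) * B (σ k) * Rest σ))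
        + (Equiv.Perm.sign σ : ℤ) • (A (σ i) * A (σ k) * (B (σ j) * B (σ l) * Rest σ)) := by
    intro σ
    rw [← smul_sub, ← smul_sub, ← smul_add]
    congr 1
    ring
  rw [Finset.sum_congr rfl (fun σ _ => split σ)]
  rw [Finset.sum_add_distrib, Finset.sum_sub_distrib, Finset.sum_sub_distrib]
  rw [e1, e2, e3, e4]
  ring

/-- Invariance of the "rest" product under a swap avoiding all its slots. -/
private lemma rest_inv17 {R : Type*} [CommRing R] {n m : ℕ}
    (F : Fin m → Fin n → Fin n → R) (e e' : Fin m → Fin n)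
    (t : Finset (Fin m)) (u v : Fin n)
    (h : ∀ x ∈ t, e x ≠ u ∧ e x ≠ v ∧ e' x ≠ u ∧ e' x ≠ v)
    (σ : Equiv.Perm (Fin n)) :
    ∏ x ∈ t, F x ((σ * Equiv.swap u v) (e x)) ((σ * Equiv.swap u v) (e' x))
      = ∏ x ∈ t, F x (σ (e x)) (σ (e' x)) := by
  refine Finset.prod_congr rfl fun x hx => ?_
  obtain ⟨h1, h2, h3, h4⟩ := h x hx
  rw [Equiv.Perm.mul_apply, Equiv.Perm.mul_apply,
    Equiv.swap_apply_of_ne_of_ne h1 h2, Equiv.swap_apply_of_ne_of_ne h3 h4]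

/-- Core vanishing: if the factors at two positions `p ≠ q` are built from the
same rank-2 pair `(A, B)`, the full alternating sum vanishes. -/
private lemma inner_core17 {R : Type*} [CommRing R] [Algebra ℚ R] {n m : ℕ}
    (F : Fin m → Fin n → Fin n → R) (A B : Fin n → R) (e e' : Fin m → Fin n)
    (p q : Fin m) (hpq : p ≠ q)
    (hFp : ∀ u v, F p u v = B u * A v - A u * B v)
    (hFq : ∀ u v, F q u v = B u * A v - A u * B v)
    (hij : e p ≠ e' p) (hik : e p ≠ e q) (hil : e p ≠ e' q)
    (hjk : e' p ≠ e q) (hjl : e' p ≠ e' q) (hkl : e q ≠ e' q)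
    (hne : ∀ x : Fin m, x ≠ p → x ≠ q →
      e x ≠ e p ∧ e x ≠ e q ∧ e x ≠ e' q ∧ e' x ≠ e p ∧ e' x ≠ e q ∧ e' x ≠ e' q) :
    ∑ σ : Equiv.Perm (Fin n), (Equiv.Perm.sign σ : ℤ) •
      ∏ x : Fin m, F x (σ (e x)) (σ (e' x)) = 0 := by
  have hqmem : q ∈ Finset.univ.erase p := by
    simp [Finset.mem_erase, Ne.symm hpq]
  have hR1 : ∀ σ : Equiv.Perm (Fin n),
      (∏ x ∈ (Finset.univ.erase p).erase q,
        F x ((σ * Equiv.swap (e p) (e q)) (e x)) ((σ * Equiv.swap (e p) (e q)) (e' x)))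
      = ∏ x ∈ (Finset.univ.erase p).erase q, F x (σ (e x)) (σ (e' x)) := by
    intro σ
    refine rest_inv17 F e e' _ _ _ (fun x hx => ?_) σ
    rw [Finset.mem_erase, Finset.mem_erase] at hx
    obtain ⟨h1, h2, h3, h4, h5, h6⟩ := hne x hx.2.1 hx.1
    exact ⟨h1, h2, h4, h5⟩
  have hR2 : ∀ σ : Equiv.Perm (Fin n),
      (∏ x ∈ (Finset.univ.erase p).erase q,
        F x ((σ * Equiv.swap (e p) (e' q)) (e x)) ((σ * Equiv.swap (e p) (e' q)) (e' x)))
      = ∏ x ∈ (Finset.univ.erase p).erase q, F x (σ (e x)) (σ (e' x)) := by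
    intro σ
    refine rest_inv17 F e e' _ _ _ (fun x hx => ?_) σ
    rw [Finset.mem_erase, Finset.mem_erase] at hx
    obtain ⟨h1, h2, h3, h4, h5, h6⟩ := hne x hx.2.1 hx.1
    exact ⟨h1, h3, h4, h6⟩
  refine Eq.trans (Finset.sum_congr rfl fun σ _ => ?_)
    (kill17 (e p) (e' p) (e q) (e' q) hij hik hil hjk hjl hkl A B
      (fun σ => ∏ x ∈ (Finset.univ.erase p).erase q, F x (σ (e x)) (σ (e' x))) hR1 hR2)
  rw [← Finset.mul_prod_erase Finset.univ _ (Finset.mem_univ p),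
    ← Finset.mul_prod_erase _ _ hqmem, hFp, hFq]
  congr 1
  ring

/-- Restriction to distinct indices: for rank-2 antisymmetric matrices
`G^r = b^r ⊗ a^r - a^r ⊗ b^r`, the weighted sum over all index tuples equals
the same sum restricted to tuples of pairwise distinct indices. -/
theorem stmt17 {R : Type*} [CommRing R] [Algebra ℚ R] {d : ℕ}
    (a b : Fin d → Fin (2 * d) → R) (c : Fin d → R)
    (G : Fin d → Matrix (Fin (2 * d)) (Fin (2 * d)) R)
    (hG : ∀ r k l, G r k l = b r k * a r l - a r k * b r l) :
    ∑ r : Fin d → Fin d,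
      (∏ p : Fin d, c (r p)) *
        ∑ σ : Equiv.Perm (Fin (2 * d)), (Equiv.Perm.sign σ : ℤ) •
          ∏ p : Fin d,
            G (r p) (σ ⟨2 * p, by have := p.isLt; omega⟩)
              (σ ⟨2 * p + 1, by have := p.isLt; omega⟩)
    = ∑ r ∈ Finset.univ.filter (fun r : Fin d → Fin d => Function.Injective r),
        (∏ p : Fin d, c (r p)) *
          ∑ σ : Equiv.Perm (Fin (2 * d)), (Equiv.Perm.sign σ : ℤ) •
            ∏ p : Fin d,
              G (r p) (σ ⟨2 * p, by have := p.isLt; omega⟩)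
                (σ ⟨2 * p + 1, by have := p.isLt; omega⟩) := by
  refine (Finset.sum_subset (Finset.filter_subset _ _) fun r _ hnr => ?_).symm
  have hninj : ¬ Function.Injective r := by
    intro hinj
    exact hnr (Finset.mem_filter.mpr ⟨Finset.mem_univ r, hinj⟩)
  rw [Function.Injective] at hninj
  push_neg at hninj
  obtain ⟨p, q, hrpq, hpq⟩ := hninj
  have hpqv : (p : ℕ) ≠ (q : ℕ) := fun h => hpq (Fin.ext h)
  have hz : (∑ σ : Equiv.Perm (Fin (2 * d)), (Equiv.Perm.sign σ : ℤ) •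
      ∏ x : Fin d, G (r x) (σ ⟨2 * x, by have := x.isLt; omega⟩)
        (σ ⟨2 * x + 1, by have := x.isLt; omega⟩)) = 0 := by
    refine inner_core17 (fun x => G (r x)) (a (r p)) (b (r p))
      (fun x => ⟨2 * x, by have := x.isLt; omega⟩)
      (fun x => ⟨2 * x + 1, by have := x.isLt; omega⟩) p q hpq
      (fun u v => hG (r p) u v) (fun u v => by show G (r q) u v = _; rw [← hrpq]; exact hG (r p) u v)
      ?_ ?_ ?_ ?_ ?_ ?_ ?_
    · simp only [ne_eq, Fin.mk.injEq]; omega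
    · simp only [ne_eq, Fin.mk.injEq]; omega
    · simp only [ne_eq, Fin.mk.injEq]; omega
    · simp only [ne_eq, Fin.mk.injEq]; omega
    · simp only [ne_eq, Fin.mk.injEq]; omega
    · simp only [ne_eq, Fin.mk.injEq]; omega
    · intro x hxp hxq
      have hxpv : (x : ℕ) ≠ (p : ℕ) := fun h => hxp (Fin.ext h)
      have hxqv : (x : ℕ) ≠ (q : ℕ) := fun h => hxq (Fin.ext h)
      refine ⟨?_, ?_, ?_, ?_, ?_, ?_⟩ <;> simp only [ne_eq, Fin.mk.injEq] <;> omega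
  rw [hz, mul_zero]
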